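/- Let F : C ⥤ D be a fully faithful triangulated functor between pretriangulated categories which admits a right adjoint (or a left adjoint) compatible with the shift functors. Then the essential image of F is a thick triangulated subcategory of D, i.e. it is closed under shifts in both directions, under cones of morphisms between its objects, and under direct summands. -/

import Mathlib

open CategoryTheory Limits Pretriangulated

/-- A class of objects of a pretriangulated category is *thick* if it is closed under
isomorphisms, shifts in both directions, cones of morphisms between its objects
(i.e. for any distinguished triangle with first two objects in the class, the third is too),
and direct summands. -/
def IsThickClass {C : Type*} [Category C] [Preadditive C] [HasZeroObject C] [HasShift C ℤ]
    [∀ n : ℤ, (shiftFunctor C n).Additive] [Pretriangulated C] (S : Set C) : Prop :=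
  (∀ (Z Z' : C), (Z ≅ Z') → Z ∈ S → Z' ∈ S) ∧
  (∀ Z ∈ S, ∀ n : ℤ, Z⟦n⟧ ∈ S) ∧
  (∀ T : Triangle C, T ∈ (distTriang C) → T.obj₁ ∈ S → T.obj₂ ∈ S → T.obj₃ ∈ S) ∧
  (∀ (Z Y : C), Z ∈ S → ∀ (i : Y ⟶ Z) (p : Z ⟶ Y), i ≫ p = 𝟙 Y → Y ∈ S)

/-- If `F ⊣ G` and `F` is fully faithful, the essential image of `F` is closed under
retracts. -/
lemma essImage_retract_of_leftAdjoint {C D : Type*} [Category C] [Category D]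
    (F : C ⥤ D) [F.Full] [F.Faithful] (G : D ⥤ C) (adj : F ⊣ G)
    (Z Y : D) (hZ : F.essImage Z) (i : Y ⟶ Z) (p : Z ⟶ Y) (hip : i ≫ p = 𝟙 Y) :
    F.essImage Y := by
  have : IsIso (adj.counit.app Z) := by
    obtain ⟨X, ⟨e⟩⟩ := hZ
    have h1 : IsIso (adj.counit.app (F.obj X)) := by
      have := adj.left_triangle_components X
      exact ⟨F.map (adj.unit.app X), by
        rw [← cancel_epi (F.map (adj.unit.app X))] <;> simp [this], this⟩
    have hn := adj.counit.naturality e.hom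
    simp only [Functor.comp_map, Functor.id_map] at hn
    have : adj.counit.app Z = (F.map (G.map e.inv)) ≫ adj.counit.app (F.obj X) ≫ e.hom := by
      rw [← cancel_epi (F.map (G.map e.hom))]
      rw [← Functor.map_comp_assoc, ← G.map_comp, e.hom_inv_id, G.map_id, F.map_id,
        Category.id_comp, hn]
    rw [this]
    infer_instance
  refine ⟨G.obj Y, ⟨?_⟩⟩
  refine ⟨adj.counit.app Y, i ≫ inv (adj.counit.app Z) ≫ F.map (G.map p), ?_, ?_⟩
  · have h := adj.counit.naturality i
    simp only [Functor.comp_map, Functor.id_map] at h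
    calc adj.counit.app Y ≫ i ≫ inv (adj.counit.app Z) ≫ F.map (G.map p)
        = (adj.counit.app Y ≫ i) ≫ inv (adj.counit.app Z) ≫ F.map (G.map p) := by simp
      _ = (F.map (G.map i) ≫ adj.counit.app Z) ≫ inv (adj.counit.app Z) ≫ F.map (G.map p) := by
          rw [h]
      _ = F.map (G.map i) ≫ F.map (G.map p) := by
          rw [Category.assoc, IsIso.hom_inv_id_assoc]
      _ = 𝟙 _ := by rw [← F.map_comp, ← G.map_comp, hip]; simp
  · have h := adj.counit.naturality p
    simp only [Functor.comp_map, Functor.id_map] at h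
    calc (i ≫ inv (adj.counit.app Z) ≫ F.map (G.map p)) ≫ adj.counit.app Y
        = i ≫ inv (adj.counit.app Z) ≫ (F.map (G.map p) ≫ adj.counit.app Y) := by simp
      _ = i ≫ inv (adj.counit.app Z) ≫ adj.counit.app Z ≫ p := by rw [h]
      _ = 𝟙 _ := by rw [IsIso.inv_hom_id_assoc, hip]

/-- If `G ⊣ F` and `F` is fully faithful, the essential image of `F` is closed under
retracts. -/
lemma essImage_retract_of_rightAdjoint {C D : Type*} [Category C] [Category D]
    (F : C ⥤ D) [F.Full] [F.Faithful] (G : D ⥤ C) (adj : G ⊣ F)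
    (Z Y : D) (hZ : F.essImage Z) (i : Y ⟶ Z) (p : Z ⟶ Y) (hip : i ≫ p = 𝟙 Y) :
    F.essImage Y := by
  have : IsIso (adj.unit.app Z) := by
    obtain ⟨X, ⟨e⟩⟩ := hZ
    have h1 : IsIso (adj.unit.app (F.obj X)) := by
      have := adj.right_triangle_components X
      exact ⟨F.map (adj.counit.app X), this, by
        rw [← cancel_mono (F.map (adj.counit.app X))] <;> simp [this]⟩
    have hn := adj.unit.naturality e.hom
    simp only [Functor.comp_map, Functor.id_map] at hn
    have : adj.unit.app Z = e.inv ≫ adj.unit.app (F.obj X) ≫ F.map (G.map e.hom) := by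
      rw [← hn, e.inv_hom_id_assoc]
    rw [this]
    infer_instance
  refine ⟨G.obj Y, ⟨?_⟩⟩
  refine ⟨F.map (G.map i) ≫ inv (adj.unit.app Z) ≫ p, adj.unit.app Y, ?_, ?_⟩
  · have h := adj.unit.naturality p
    simp only [Functor.comp_map, Functor.id_map] at h
    calc (F.map (G.map i) ≫ inv (adj.unit.app Z) ≫ p) ≫ adj.unit.app Y
        = F.map (G.map i) ≫ inv (adj.unit.app Z) ≫ (p ≫ adj.unit.app Y) := by simp
      _ = F.map (G.map i) ≫ inv (adj.unit.app Z) ≫ adj.unit.app Z ≫ F.map (G.map p) := by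
          rw [h]
      _ = F.map (G.map i) ≫ F.map (G.map p) := by
          rw [IsIso.inv_hom_id_assoc]
      _ = 𝟙 _ := by rw [← F.map_comp, ← G.map_comp, hip]; simp
  · have h := adj.unit.naturality i
    simp only [Functor.comp_map, Functor.id_map] at h
    calc adj.unit.app Y ≫ F.map (G.map i) ≫ inv (adj.unit.app Z) ≫ p
        = (adj.unit.app Y ≫ F.map (G.map i)) ≫ inv (adj.unit.app Z) ≫ p := by simp
      _ = (i ≫ adj.unit.app Z) ≫ inv (adj.unit.app Z) ≫ p := by rw [← h]
      _ = 𝟙 _ := by rw [Category.assoc, IsIso.hom_inv_id_assoc, hip]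

/-- Let `F : C ⥤ D` be a fully faithful triangulated functor between
pretriangulated categories which admits a right adjoint (or a left adjoint) compatible with
the shift functors. Then the essential image of `F` is a thick triangulated subcategory
of `D`. -/
theorem stmt_2 {C : Type*} [Category C] {D : Type*} [Category D]
    [Preadditive C] [HasZeroObject C] [HasShift C ℤ]
    [∀ n : ℤ, (shiftFunctor C n).Additive] [Pretriangulated C]
    [Preadditive D] [HasZeroObject D] [HasShift D ℤ]
    [∀ n : ℤ, (shiftFunctor D n).Additive] [Pretriangulated D]
    (F : C ⥤ D) [F.Full] [F.Faithful] [F.CommShift ℤ] [F.IsTriangulated]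
    (hadj :
      (∃ (G : D ⥤ C) (cG : G.CommShift ℤ) (adj : F ⊣ G),
        letI := cG
        NatTrans.CommShift adj.unit ℤ ∧ NatTrans.CommShift adj.counit ℤ) ∨
      (∃ (G : D ⥤ C) (cG : G.CommShift ℤ) (adj : G ⊣ F),
        letI := cG
        NatTrans.CommShift adj.unit ℤ ∧ NatTrans.CommShift adj.counit ℤ)) :
    IsThickClass F.essImage := by
  refine ⟨?_, ?_, ?_, ?_⟩
  · rintro Z Z' e ⟨X, ⟨eX⟩⟩
    exact ⟨X, ⟨eX ≪≫ e⟩⟩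
  · rintro Z ⟨X, ⟨eX⟩⟩ n
    exact ⟨X⟦n⟧, ⟨(F.commShiftIso n).app X ≪≫ (shiftFunctor D n).mapIso eX⟩⟩
  · rintro T hT ⟨X, ⟨e₁⟩⟩ ⟨Y, ⟨e₂⟩⟩
    set f : X ⟶ Y := F.preimage (e₁.hom ≫ T.mor₁ ≫ e₂.inv) with hf
    obtain ⟨W, g, h, hW⟩ := distinguished_cocone_triangle f
    have hFW := F.map_distinguished _ hW
    have comm : (F.mapTriangle.obj (Triangle.mk f g h)).mor₁ ≫ e₂.hom =
        e₁.hom ≫ T.mor₁ := by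
      change F.map f ≫ e₂.hom = e₁.hom ≫ T.mor₁
      simp [hf]
    have eT := isoTriangleOfIso₁₂ _ _ hFW hT e₁ e₂ comm
    exact ⟨W, ⟨Triangle.π₃.mapIso eT⟩⟩
  · rintro Z Y hZ i p hip
    rcases hadj with ⟨G, _, adj, _⟩ | ⟨G, _, adj, _⟩
    · exact essImage_retract_of_leftAdjoint F G adj Z Y hZ i p hip
    · exact essImage_retract_of_rightAdjoint F G adj Z Y hZ i p hip
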